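/- Let X be a set and F a class of real-valued functions on X that is closed under affine transformations. Let T and N be positive integers, x_1,…,x_T ∈ X, y_1,…,y_T ∈ {0,1}, P_1,…,P_T probability distributions on the grid Z, and α > 0. Assume that for every family (g_p)_{p∈Z} with g_p ∈ F_4 for each p ∈ Z, Σ_{t=1}^T Σ_{p∈Z} P_t(p)·((p − y_t)² − (g_p(x_t) − y_t)²) ≤ α. Then for every family (f_p)_{p∈Z} with f_p ∈ F_1 for each p ∈ Z, Σ_{p∈Z} (Σ_{t=1}^T P_t(p)) · ρ̃_{p,f_p}² ≤ α. -/

import Mathlib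

open Finset

/- **Statement 3.** If `F` is closed under affine transformations and the
pseudo contextual swap regret against `F₄` is at most `α`, then the
ℓ₂-pseudo swap multicalibration error against `F₁` is at most `α`. -/
theorem stmt3 {X : Type*} (F : Set (X → ℝ))
    (hclosed : ∀ f ∈ F, ∀ a b : ℝ, (fun x' => a * f x' + b) ∈ F)
    (T N : ℕ) (hT : 0 < T) (hN : 0 < N)
    (x : Fin T → X) (y : Fin T → ℝ) (hy : ∀ t, y t = 0 ∨ y t = 1)
    (P : Fin T → Fin (N + 1) → ℝ)
    (hP0 : ∀ t i, 0 ≤ P t i) (hP1 : ∀ t, ∑ i, P t i = 1)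
    (α : ℝ) (hα : 0 < α)
    (hreg : ∀ g : Fin (N + 1) → X → ℝ,
      (∀ p, g p ∈ F ∧ ∀ x' : X, (g p x') ^ 2 ≤ 4) →
      ∑ t, ∑ p : Fin (N + 1),
          P t p * ((((p : ℕ) : ℝ) / N - y t) ^ 2 - (g p (x t) - y t) ^ 2) ≤ α) :
    ∀ f : Fin (N + 1) → X → ℝ,
      (∀ p, f p ∈ F ∧ ∀ x' : X, (f p x') ^ 2 ≤ 1) →
      ∑ p : Fin (N + 1), (∑ t, P t p) *
          ((∑ t, P t p * (f p (x t) * (y t - ((p : ℕ) : ℝ) / N))) /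
            (∑ t, P t p)) ^ 2 ≤ α := by
  intro f hf
  have hNpos : (0:ℝ) < N := by exact_mod_cast hN
  set ρ : Fin (N + 1) → ℝ := fun p =>
    (∑ t, P t p * (f p (x t) * (y t - ((p : ℕ) : ℝ) / N))) / (∑ t, P t p) with hρ
  have hpN : ∀ p : Fin (N + 1), 0 ≤ ((p : ℕ) : ℝ) / N ∧ ((p : ℕ) : ℝ) / N ≤ 1 := by
    intro p
    constructor
    · positivity
    · rw [div_le_one hNpos]
      exact_mod_cast Nat.lt_succ_iff.mp p.2
  have hfabs : ∀ p x', |f p x'| ≤ 1 := by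
    intro p x'
    have := (hf p).2 x'
    nlinarith [abs_nonneg (f p x'), sq_abs (f p x')]
  have hyabs : ∀ (t) (p : Fin (N + 1)), |y t - ((p : ℕ) : ℝ) / N| ≤ 1 := by
    intro t p
    obtain ⟨h1, h2⟩ := hpN p
    rcases hy t with h | h <;> rw [h, abs_le] <;> constructor <;> linarith
  -- bound on the numerator
  have hnum : ∀ p : Fin (N + 1),
      |∑ t, P t p * (f p (x t) * (y t - ((p : ℕ) : ℝ) / N))| ≤ ∑ t, P t p := by
    intro p
    refine le_trans (Finset.abs_sum_le_sum_abs _ _) (Finset.sum_le_sum fun t _ => ?_)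
    rw [abs_mul, abs_of_nonneg (hP0 t p), abs_mul]
    calc P t p * (|f p (x t)| * |y t - ((p : ℕ) : ℝ) / N|)
        ≤ P t p * (1 * 1) := by
          apply mul_le_mul_of_nonneg_left _ (hP0 t p)
          exact mul_le_mul (hfabs p (x t)) (hyabs t p) (abs_nonneg _) zero_le_one
      _ = P t p := by ring
  have hS0 : ∀ p : Fin (N + 1), 0 ≤ ∑ t, P t p :=
    fun p => Finset.sum_nonneg fun t _ => hP0 t p
  have hρabs : ∀ p, |ρ p| ≤ 1 := by
    intro p
    rcases eq_or_lt_of_le (hS0 p) with h | h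
    · simp [hρ, ← h]
    · rw [hρ, abs_div, abs_of_pos h, div_le_one h]
      exact hnum p
  set g : Fin (N + 1) → X → ℝ := fun p x' => ρ p * f p x' + ((p : ℕ) : ℝ) / N with hg
  have hgF : ∀ p, g p ∈ F ∧ ∀ x' : X, (g p x') ^ 2 ≤ 4 := by
    intro p
    constructor
    · exact hclosed (f p) (hf p).1 (ρ p) _
    · intro x'
      have h1 : |ρ p * f p x'| ≤ 1 := by
        rw [abs_mul]
        exact mul_le_one₀ (hρabs p) (abs_nonneg _) (hfabs p x')
      obtain ⟨h2, h3⟩ := hpN p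
      rw [abs_le] at h1
      simp only [hg]
      nlinarith [h1.1, h1.2]
  have key := hreg g hgF
  rw [Finset.sum_comm] at key
  refine le_trans (Finset.sum_le_sum fun p _ => ?_) key
  -- per-p inequality
  have expand : ∀ t, P t p * ((((p : ℕ) : ℝ) / N - y t) ^ 2 - (g p (x t) - y t) ^ 2)
      = 2 * ρ p * (P t p * (f p (x t) * (y t - ((p : ℕ) : ℝ) / N)))
        - ρ p ^ 2 * (P t p * (f p (x t)) ^ 2) := by
    intro t
    simp only [hg]
    ring
  have hsum : ∑ t, P t p * ((((p : ℕ) : ℝ) / N - y t) ^ 2 - (g p (x t) - y t) ^ 2)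
      = 2 * ρ p * (∑ t, P t p * (f p (x t) * (y t - ((p : ℕ) : ℝ) / N)))
        - ρ p ^ 2 * (∑ t, P t p * (f p (x t)) ^ 2) := by
    rw [Finset.mul_sum, Finset.mul_sum, ← Finset.sum_sub_distrib]
    exact Finset.sum_congr rfl fun t _ => expand t
  rw [hsum]
  have hfs : ∑ t, P t p * (f p (x t)) ^ 2 ≤ ∑ t, P t p := by
    refine Finset.sum_le_sum fun t _ => ?_
    have := (hf p).2 (x t)
    nlinarith [hP0 t p]
  have hfs0 : 0 ≤ ∑ t, P t p * (f p (x t)) ^ 2 :=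
    Finset.sum_nonneg fun t _ => mul_nonneg (hP0 t p) (sq_nonneg _)
  rcases eq_or_lt_of_le (hS0 p) with h | h
  · -- sum is zero
    have hz : ∀ t ∈ Finset.univ, P t p = 0 := by
      intro t _
      have := Finset.sum_eq_zero_iff_of_nonneg (fun t _ => hP0 t p) |>.mp h.symm
      exact this t (Finset.mem_univ t)
    have h1 : ∑ t, P t p * (f p (x t) * (y t - ((p : ℕ) : ℝ) / N)) = 0 :=
      Finset.sum_eq_zero fun t ht => by rw [hz t ht]; ring
    have h2 : ∑ t, P t p * (f p (x t)) ^ 2 = 0 :=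
      Finset.sum_eq_zero fun t ht => by rw [hz t ht]; ring
    rw [← h, h1, h2]
    ring_nf
    simp
  · have hnum' : ∑ t, P t p * (f p (x t) * (y t - ((p : ℕ) : ℝ) / N))
        = ρ p * ∑ t, P t p := by
      rw [hρ]
      exact (div_mul_cancel₀ _ (ne_of_gt h)).symm
    rw [hnum', mul_div_assoc, div_self (ne_of_gt h), mul_one]
    nlinarith [sq_nonneg (ρ p), hfs, h]
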